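/- Let μ be a probability measure on ℝ with support contained in an open interval (a,b), let φ : ℝ → ℝ be a C¹, non-decreasing, bounded function, and let s(ε) be an upper bound for μ([E−ε/2, E+ε/2]) over all E ∈ ℝ. Then for every ε > 0, ∫ (φ(λ+ε) − φ(λ)) dμ(λ) ≤ s(ε)·(φ(b+ε) − φ(a)). -/

import Mathlib

open MeasureTheory

/-- Partial integration lemma for singular distributions (Lemma `l-sme`):
if `μ` is a probability measure supported in `(a,b)`, `φ` is C¹, non-decreasing and
bounded, and `s ε` bounds `μ [E-ε/2, E+ε/2]` uniformly in `E`, then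
`∫ (φ(λ+ε) - φ(λ)) dμ ≤ s(ε) · (φ(b+ε) - φ(a))`. -/
theorem stmt0 (μ : Measure ℝ) [IsProbabilityMeasure μ] (a b : ℝ)
    (hsupp : μ (Set.Ioo a b)ᶜ = 0)
    (φ : ℝ → ℝ) (hφC1 : ContDiff ℝ 1 φ) (hφmono : Monotone φ)
    (hφbdd : ∃ M, ∀ x, |φ x| ≤ M)
    (s : ℝ → ℝ)
    (hs : ∀ ε > 0, ∀ E : ℝ,
      μ (Set.Icc (E - ε / 2) (E + ε / 2)) ≤ ENNReal.ofReal (s ε)) :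
    ∀ ε > 0, ∫ l, (φ (l + ε) - φ l) ∂μ ≤ s ε * (φ (b + ε) - φ a) := by
  intro ε hε
  have hdiff : Differentiable ℝ φ := hφC1.differentiable one_ne_zero
  have hcd : Continuous (deriv φ) := hφC1.continuous_deriv le_rfl
  -- derivative is nonnegative
  have hdn : ∀ t, 0 ≤ deriv φ t := by
    intro t
    have h : Filter.Tendsto (slope φ t) (nhdsWithin t (Set.Ioi t)) (nhds (deriv φ t)) :=
      (hasDerivAt_iff_tendsto_slope.mp (hdiff t).hasDerivAt).mono_left
        (nhdsWithin_mono t fun y hy => ne_of_gt hy)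
    refine ge_of_tendsto h ?_
    filter_upwards [self_mem_nhdsWithin] with y hy
    rw [slope_def_field]
    exact div_nonneg (sub_nonneg.2 (hφmono (le_of_lt hy))) (sub_nonneg.2 (le_of_lt hy))
  -- a < b
  have hab : a < b := by
    by_contra h
    have he : Set.Ioo a b = ∅ := Set.Ioo_eq_empty h
    have : μ Set.univ = 0 := by
      rw [← Set.compl_empty, ← he]; exact hsupp
    simp [measure_univ] at this
  -- s ε is nonneg
  have hsε : 0 ≤ s ε := by
    by_contra h
    push_neg at h
    have h0 : ENNReal.ofReal (s ε) = 0 := ENNReal.ofReal_eq_zero.mpr h.le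
    have hcover : (Set.univ : Set ℝ) ⊆ ⋃ n : ℤ, Set.Icc ((n : ℝ) * ε - ε / 2) ((n : ℝ) * ε + ε / 2) := by
      intro x _
      refine Set.mem_iUnion.mpr ⟨⌊x / ε + 1 / 2⌋, ?_⟩
      have h1 : ((⌊x / ε + 1 / 2⌋ : ℤ) : ℝ) ≤ x / ε + 1 / 2 := Int.floor_le _
      have h2 : x / ε + 1 / 2 < (⌊x / ε + 1 / 2⌋ : ℤ) + 1 := Int.lt_floor_add_one _
      have hxε : x / ε * ε = x := div_mul_cancel₀ x (ne_of_gt hε)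
      constructor
      · nlinarith [mul_lt_mul_of_pos_right h2 hε]
      · nlinarith [mul_le_mul_of_nonneg_right h1 hε.le]
    have : μ Set.univ ≤ 0 := by
      calc μ Set.univ ≤ μ (⋃ n : ℤ, Set.Icc ((n : ℝ) * ε - ε / 2) ((n : ℝ) * ε + ε / 2)) :=
            measure_mono hcover
        _ ≤ ∑' n : ℤ, μ (Set.Icc ((n : ℝ) * ε - ε / 2) ((n : ℝ) * ε + ε / 2)) := measure_iUnion_le _
        _ ≤ ∑' _ : ℤ, 0 := ENNReal.tsum_le_tsum fun n => by
            simpa [h0] using hs ε hε ((n : ℝ) * ε)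
        _ = 0 := by simp
    simp [measure_univ] at this
  have hφab : 0 ≤ φ (b + ε) - φ a := sub_nonneg.2 (hφmono (by linarith))
  -- FTC key
  have key : ∀ u v : ℝ, u ≤ v →
      ∫⁻ t in Set.Ioc u v, ENNReal.ofReal (deriv φ t) = ENNReal.ofReal (φ v - φ u) := by
    intro u v huv
    have hint : IntegrableOn (deriv φ) (Set.Ioc u v) volume :=
      (intervalIntegrable_iff_integrableOn_Ioc_of_le huv).mp (hcd.intervalIntegrable u v)
    rw [← ofReal_integral_eq_lintegral_ofReal hint (ae_of_all _ fun t => hdn t)]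
    congr 1
    rw [← intervalIntegral.integral_of_le huv]
    exact intervalIntegral.integral_deriv_eq_sub (fun x _ => hdiff x)
      (hcd.intervalIntegrable u v)
  -- set up product function
  set T : Set (ℝ × ℝ) := {p | p.1 ∈ Set.Ioo a b ∧ p.2 ∈ Set.Ioc p.1 (p.1 + ε)} with hT
  have hTmeas : MeasurableSet T := by
    have : T = {p : ℝ × ℝ | a < p.1} ∩ {p : ℝ × ℝ | p.1 < b} ∩ {p : ℝ × ℝ | p.1 < p.2}
        ∩ {p : ℝ × ℝ | p.2 ≤ p.1 + ε} := by
      ext p; simp [hT, Set.mem_Ioo, Set.mem_Ioc]; tauto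
    rw [this]
    exact (((measurableSet_lt measurable_const measurable_fst).inter
      (measurableSet_lt measurable_fst measurable_const)).inter
      (measurableSet_lt measurable_fst measurable_snd)).inter
      (measurableSet_le measurable_snd (measurable_fst.add_const ε))
  set F : ℝ → ℝ → ENNReal := fun l t => T.indicator (fun p => ENNReal.ofReal (deriv φ p.2)) (l, t)
    with hF
  have hFmeas : Measurable (Function.uncurry F) := by
    have : Function.uncurry F = T.indicator (fun p => ENNReal.ofReal (deriv φ p.2)) := rfl
    rw [this]
    exact ((ENNReal.measurable_ofReal.comp (hcd.measurable.comp measurable_snd))).indicator hTmeas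
  -- Step 1: rewrite the integral
  have hnn : 0 ≤ᵐ[μ] fun l => φ (l + ε) - φ l :=
    ae_of_all _ fun l => sub_nonneg.2 (hφmono (by linarith))
  have hmeas : AEStronglyMeasurable (fun l => φ (l + ε) - φ l) μ :=
    ((hφC1.continuous.comp (continuous_id.add continuous_const)).sub
      hφC1.continuous).aestronglyMeasurable
  rw [integral_eq_lintegral_of_nonneg_ae hnn hmeas]
  -- Step 2: the lintegral equals the double lintegral
  have hae : ∀ᵐ l ∂μ, l ∈ Set.Ioo a b := by
    rw [MeasureTheory.ae_iff]
    exact hsupp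
  have step2 : ∫⁻ l, ENNReal.ofReal (φ (l + ε) - φ l) ∂μ = ∫⁻ l, ∫⁻ t, F l t ∂volume ∂μ := by
    refine lintegral_congr_ae ?_
    filter_upwards [hae] with l hl
    have hFl : (fun t => F l t) = (Set.Ioc l (l + ε)).indicator
        (fun t => ENNReal.ofReal (deriv φ t)) := by
      ext t
      have hmem : (l, t) ∈ T ↔ t ∈ Set.Ioc l (l + ε) := by
        simp only [hT, Set.mem_setOf_eq]
        exact and_iff_right hl
      by_cases ht : t ∈ Set.Ioc l (l + ε)
      · rw [Set.indicator_of_mem ht]; exact Set.indicator_of_mem (hmem.mpr ht) _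
      · rw [Set.indicator_of_notMem ht]
        exact Set.indicator_of_notMem (fun h => ht (hmem.mp h)) _
    rw [hFl, lintegral_indicator measurableSet_Ioc, key l (l + ε) (by linarith)]
  rw [step2, lintegral_lintegral_swap hFmeas.aemeasurable]
  -- Step 3: inner integral computation
  have inner : ∀ t : ℝ, ∫⁻ l, F l t ∂μ
      = ENNReal.ofReal (deriv φ t) * μ (Set.Ioo a b ∩ Set.Ico (t - ε) t) := by
    intro t
    have hFt : (fun l => F l t) = (Set.Ioo a b ∩ Set.Ico (t - ε) t).indicator
        (fun _ => ENNReal.ofReal (deriv φ t)) := by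
      ext l
      have hiff : (l, t) ∈ T ↔ l ∈ Set.Ioo a b ∩ Set.Ico (t - ε) t := by
        simp only [hT, Set.mem_setOf_eq, Set.mem_Ioo, Set.mem_Ioc, Set.mem_inter_iff,
          Set.mem_Ico]
        constructor
        · rintro ⟨⟨h1, h2⟩, h3, h4⟩; exact ⟨⟨h1, h2⟩, by linarith, h3⟩
        · rintro ⟨⟨h1, h2⟩, h3, h4⟩; exact ⟨⟨h1, h2⟩, h4, by linarith⟩
      by_cases hmem : (l, t) ∈ T
      · rw [Set.indicator_of_mem (hiff.mp hmem)]; exact Set.indicator_of_mem hmem _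
      · rw [Set.indicator_of_notMem (fun h => hmem (hiff.mpr h))]
        exact Set.indicator_of_notMem hmem _
    rw [hFt, lintegral_indicator_const
      ((measurableSet_Ioo.inter measurableSet_Ico)) _]
  have step3 : ∫⁻ t, ∫⁻ l, F l t ∂μ ∂volume
      ≤ ∫⁻ t, (Set.Ioc a (b + ε)).indicator
        (fun t => ENNReal.ofReal (deriv φ t) * ENNReal.ofReal (s ε)) t ∂volume := by
    refine lintegral_mono fun t => ?_
    rw [inner t]
    by_cases ht : t ∈ Set.Ioc a (b + ε)
    · rw [Set.indicator_of_mem ht]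
      refine mul_le_mul_right ?_ _
      calc μ (Set.Ioo a b ∩ Set.Ico (t - ε) t) ≤ μ (Set.Icc (t - ε) t) :=
            measure_mono fun x hx => ⟨hx.2.1, le_of_lt hx.2.2⟩
        _ ≤ ENNReal.ofReal (s ε) := by
            have := hs ε hε (t - ε / 2)
            have h1 : t - ε / 2 - ε / 2 = t - ε := by ring
            have h2 : t - ε / 2 + ε / 2 = t := by ring
            rwa [h1, h2] at this
    · rw [Set.indicator_of_notMem ht]
      have hempty : Set.Ioo a b ∩ Set.Ico (t - ε) t = ∅ := by
        rw [Set.eq_empty_iff_forall_notMem]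
        rintro l ⟨⟨h1, h2⟩, h3, h4⟩
        simp only [Set.mem_Ioc, not_and, not_le] at ht
        rcases le_or_gt t a with h | h
        · linarith
        · linarith [ht h]
      rw [hempty]
      simp
  refine le_trans (ENNReal.toReal_le_of_le_ofReal (mul_nonneg hsε hφab) ?_) le_rfl
  calc ∫⁻ t, ∫⁻ l, F l t ∂μ ∂volume
      ≤ ∫⁻ t, (Set.Ioc a (b + ε)).indicator
        (fun t => ENNReal.ofReal (deriv φ t) * ENNReal.ofReal (s ε)) t ∂volume := step3
    _ = (∫⁻ t in Set.Ioc a (b + ε), ENNReal.ofReal (deriv φ t) ∂volume) * ENNReal.ofReal (s ε) := by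
        rw [lintegral_indicator measurableSet_Ioc]
        rw [lintegral_mul_const _ hcd.measurable.ennreal_ofReal]
    _ = ENNReal.ofReal (φ (b + ε) - φ a) * ENNReal.ofReal (s ε) := by
        rw [key a (b + ε) (by linarith)]
    _ = ENNReal.ofReal (s ε * (φ (b + ε) - φ a)) := by
        rw [mul_comm, ← ENNReal.ofReal_mul hsε]
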